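/- Let R be a domain, n ≥ 1, B = R[x₁^{±1},…,xₙ^{±1}] the Laurent polynomial ring in n variables over R, and A an R-subalgebra of B. If the gap set Gap(A) is a finite set, then A is quasi-factorially closed in B. -/

import Mathlib

/-- An `R`-subalgebra `A` of `B` is quasi-factorially closed (qfc) in `B`. -/
def IsQfc {R B : Type*} [CommSemiring R] [CommRing B] [Algebra R B] (A : Subalgebra R B) : Prop :=
  ∀ a b : B, a ≠ 0 → b ≠ 0 → a * b ∈ A →
    ∃ u v : Bˣ, (u : B) * a ∈ A ∧ (v : B) * b ∈ A

/-- The cone of a subset `D ⊆ ℤⁿ` in `ℝⁿ`. -/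
def coneOf {n : ℕ} (D : Set (Fin n → ℤ)) : Set (Fin n → ℝ) :=
  {x | ∃ c : (Fin n → ℤ) →₀ ℝ, (↑c.support : Set (Fin n → ℤ)) ⊆ D ∧ (∀ a, 0 ≤ c a) ∧
      x = c.sum fun a t => t • fun i => ((a i : ℝ))}

/-- `M(A)`: the set of `a ∈ ℤⁿ` with `x^a ∈ A`. -/
def monSet {R : Type*} [CommRing R] {n : ℕ}
    (A : Set (AddMonoidAlgebra R (Fin n → ℤ))) : Set (Fin n → ℤ) :=
  {a | AddMonoidAlgebra.of' R (Fin n → ℤ) a ∈ A}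

/-- `S(A)`: the union of the supports of the elements of `A`. -/
def suppSet {R : Type*} [CommRing R] {n : ℕ}
    (A : Set (AddMonoidAlgebra R (Fin n → ℤ))) : Set (Fin n → ℤ) :=
  {a | ∃ f ∈ A, a ∈ f.coeff.support}

/-- `C(A)`: lattice points of `ℤⁿ` in the cone generated by `S(A)`. -/
def latticeCone {R : Type*} [CommRing R] {n : ℕ}
    (A : Set (AddMonoidAlgebra R (Fin n → ℤ))) : Set (Fin n → ℤ) :=
  {a | (fun i => (a i : ℝ)) ∈ coneOf (suppSet A)}

/-- The gap set `Gap(A) = C(A) \ M(A)`. -/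
def gapSet {R : Type*} [CommRing R] {n : ℕ}
    (A : Set (AddMonoidAlgebra R (Fin n → ℤ))) : Set (Fin n → ℤ) :=
  latticeCone A \ monSet A

namespace QfcAux

open Set

variable {n : ℕ}

/-- The embedding `ℤⁿ → ℝⁿ`. -/
noncomputable def iota (n : ℕ) : (Fin n → ℤ) → (Fin n → ℝ) := fun a i => (a i : ℝ)

lemma iota_injective : Function.Injective (iota n) := by
  intro a b h
  funext i
  have := congrFun h i
  simpa [iota] using this

lemma iota_add (a b : Fin n → ℤ) : iota n (a + b) = iota n a + iota n b := by
  funext i; simp [iota]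

lemma mem_coneOf_iff {D : Set (Fin n → ℤ)} {x : Fin n → ℝ} :
    x ∈ coneOf D ↔ ∃ c : (Fin n → ℤ) →₀ ℝ, (↑c.support : Set (Fin n → ℤ)) ⊆ D ∧
      (∀ a, 0 ≤ c a) ∧ x = Finsupp.linearCombination ℝ (iota n) c := by
  constructor
  · rintro ⟨c, h1, h2, h3⟩
    exact ⟨c, h1, h2, by rw [Finsupp.linearCombination_apply]; exact h3⟩
  · rintro ⟨c, h1, h2, h3⟩
    exact ⟨c, h1, h2, by rw [Finsupp.linearCombination_apply] at h3; exact h3⟩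

lemma single_mem_coneOf {D : Set (Fin n → ℤ)} {a : Fin n → ℤ} (ha : a ∈ D) :
    iota n a ∈ coneOf D := by
  rw [mem_coneOf_iff]
  refine ⟨Finsupp.single a 1, ?_, ?_, ?_⟩
  · intro x hx
    rw [Finset.mem_coe] at hx
    have := Finsupp.support_single_subset hx
    simp only [Finset.mem_singleton] at this
    subst this; exact ha
  · intro x
    rw [Finsupp.single_apply]
    split <;> norm_num
  · simp [Finsupp.linearCombination_single]

lemma coneOf_mono {D D' : Set (Fin n → ℤ)} (h : D ⊆ D') : coneOf D ⊆ coneOf D' := by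
  rintro x ⟨c, h1, h2, h3⟩
  exact ⟨c, h1.trans h, h2, h3⟩

lemma add_mem_coneOf {D : Set (Fin n → ℤ)} {x y : Fin n → ℝ}
    (hx : x ∈ coneOf D) (hy : y ∈ coneOf D) : x + y ∈ coneOf D := by
  rw [mem_coneOf_iff] at hx hy ⊢
  obtain ⟨c, hc1, hc2, rfl⟩ := hx
  obtain ⟨d, hd1, hd2, rfl⟩ := hy
  refine ⟨c + d, ?_, ?_, ?_⟩
  · refine subset_trans ?_ (Set.union_subset hc1 hd1)
    exact_mod_cast Finset.coe_subset.2 Finsupp.support_add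
  · intro q; simp only [Finsupp.add_apply]; exact add_nonneg (hc2 q) (hd2 q)
  · rw [map_add]

lemma convex_coneOf (D : Set (Fin n → ℤ)) : Convex ℝ (coneOf D) := by
  intro x hx y hy s t hs ht _
  rw [mem_coneOf_iff] at hx hy ⊢
  obtain ⟨c, hc1, hc2, rfl⟩ := hx
  obtain ⟨d, hd1, hd2, rfl⟩ := hy
  refine ⟨s • c + t • d, ?_, ?_, ?_⟩
  · refine subset_trans ?_ (Set.union_subset hc1 hd1)
    refine subset_trans (Finset.coe_subset.2 Finsupp.support_add) ?_
    push_cast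
    exact Set.union_subset_union (Finset.coe_subset.2 Finsupp.support_smul)
      (Finset.coe_subset.2 Finsupp.support_smul)
  · intro q
    simp only [Finsupp.add_apply, Finsupp.smul_apply, smul_eq_mul]
    exact add_nonneg (mul_nonneg hs (hc2 q)) (mul_nonneg ht (hd2 q))
  · rw [map_add, map_smul, map_smul]

lemma convexHull_iota_subset {D : Set (Fin n → ℤ)} :
    convexHull ℝ (iota n '' D) ⊆ coneOf D := by
  refine convexHull_min ?_ (convex_coneOf D)
  rintro x ⟨a, ha, rfl⟩
  exact single_mem_coneOf ha


set_option linter.unusedSectionVars false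

variable {R : Type*} [CommRing R] [IsDomain R]

lemma mem_support_mul_of_unique (a b : AddMonoidAlgebra R (Fin n → ℤ)) {α β : Fin n → ℤ}
    (hα : α ∈ a.coeff.support) (hβ : β ∈ b.coeff.support)
    (huniq : ∀ α' ∈ a.coeff.support, ∀ β' ∈ b.coeff.support, α' + β' = α + β → α' = α ∧ β' = β) :
    α + β ∈ (a * b).coeff.support := by
  classical
  rw [Finsupp.mem_support_iff]
  have key : (a * b).coeff (α + β) = a.coeff α * b.coeff β := by
    rw [AddMonoidAlgebra.coeff_mul, Finsupp.sum]
    rw [Finset.sum_eq_single α]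
    · rw [Finsupp.sum, Finset.sum_eq_single β]
      · rw [if_pos rfl]
      · intro β' hβ' hne
        rw [if_neg]
        intro h
        exact hne (huniq α hα β' hβ' h).2
      · intro h; exact absurd hβ h
    · intro α' hα' hne
      rw [Finsupp.sum]
      refine Finset.sum_eq_zero fun β' hβ' => ?_
      rw [if_neg]
      intro h
      exact hne (huniq α' hα' β' hβ' h).1
    · intro h; exact absurd hα h
  rw [key]
  exact mul_ne_zero (Finsupp.mem_support_iff.1 hα) (Finsupp.mem_support_iff.1 hβ)

open Pointwise in
lemma sum_mem_coneOf_mul (a b : AddMonoidAlgebra R (Fin n → ℤ)) {α β : Fin n → ℤ}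
    (hα : α ∈ a.coeff.support) (hβ : β ∈ b.coeff.support) :
    iota n (α + β) ∈ coneOf ((a * b).coeff.support : Set (Fin n → ℤ)) := by
  classical
  set S : Set (Fin n → ℝ) := iota n '' ((↑a.coeff.support + ↑b.coeff.support : Set (Fin n → ℤ))) with hS
  have hSfin : S.Finite :=
    ((a.coeff.support.finite_toSet).add (b.coeff.support.finite_toSet)).image _
  set Q : Set (Fin n → ℝ) := convexHull ℝ S with hQdef
  have hQcomp : IsCompact Q := hSfin.isCompact_convexHull ℝ
  have hQconv : Convex ℝ Q := convex_convexHull _ _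
  have hE : Q.extremePoints ℝ ⊆ S := extremePoints_convexHull_subset
  have hEfin : (Q.extremePoints ℝ).Finite := hSfin.subset hE
  have hKM : convexHull ℝ (Q.extremePoints ℝ) = Q := by
    have h1 := closure_convexHull_extremePoints hQcomp hQconv
    rwa [(hEfin.isClosed_convexHull ℝ).closure_eq] at h1
  have hEsub : Q.extremePoints ℝ ⊆ iota n '' ((a * b).coeff.support : Set (Fin n → ℤ)) := by
    intro e he
    obtain ⟨p, hp, rfl⟩ := hE he
    obtain ⟨α', hα', β', hβ', rfl⟩ := Set.mem_add.1 hp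
    refine ⟨α' + β', ?_, rfl⟩
    refine mem_support_mul_of_unique a b hα' hβ' ?_
    intro p' hp' q' hq' hsum
    have hy : iota n (α' + q') ∈ Q :=
      subset_convexHull ℝ S ⟨_, Set.add_mem_add hα' hq', rfl⟩
    have hz : iota n (p' + β') ∈ Q :=
      subset_convexHull ℝ S ⟨_, Set.add_mem_add hp' hβ', rfl⟩
    have hPQ : iota n p' + iota n q' = iota n α' + iota n β' := by
      rw [← iota_add, ← iota_add, hsum]
    have hseg : iota n (α' + β') ∈
        openSegment ℝ (iota n (α' + q')) (iota n (p' + β')) := by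
      refine ⟨1/2, 1/2, by norm_num, by norm_num, by norm_num, ?_⟩
      rw [iota_add, iota_add, iota_add]
      have hp'' : iota n p' = iota n α' + iota n β' - iota n q' :=
        eq_sub_of_add_eq hPQ
      rw [hp'']
      module
    obtain ⟨h1, h2⟩ := (mem_extremePoints.1 he).2 _ hy _ hz hseg
    constructor
    · have := iota_injective h2
      exact add_right_cancel this
    · have := iota_injective h1
      exact add_left_cancel this
  have hQsub : Q ⊆ coneOf ((a * b).coeff.support : Set (Fin n → ℤ)) := by
    rw [← hKM]
    exact (convexHull_mono hEsub).trans convexHull_iota_subset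
  exact hQsub (subset_convexHull ℝ S ⟨_, Set.add_mem_add hα hβ, rfl⟩)

/-- The monomial `x^m` as a unit of the Laurent ring. -/
noncomputable def monUnit (R : Type*) [CommRing R] (m : Fin n → ℤ) :
    (AddMonoidAlgebra R (Fin n → ℤ))ˣ where
  val := AddMonoidAlgebra.single m 1
  inv := AddMonoidAlgebra.single (-m) 1
  val_inv := by
    rw [AddMonoidAlgebra.single_mul_single, one_mul, add_neg_cancel, AddMonoidAlgebra.one_def]
  inv_val := by
    rw [AddMonoidAlgebra.single_mul_single, one_mul, neg_add_cancel, AddMonoidAlgebra.one_def]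

lemma monomial_mul_mem {A : Subalgebra R (AddMonoidAlgebra R (Fin n → ℤ))}
    (m : Fin n → ℤ) (a : AddMonoidAlgebra R (Fin n → ℤ))
    (h : ∀ α ∈ a.coeff.support, m + α ∈ monSet (A : Set (AddMonoidAlgebra R (Fin n → ℤ)))) :
    (AddMonoidAlgebra.single m 1 : AddMonoidAlgebra R (Fin n → ℤ)) * a ∈ A := by
  classical
  have hrw : (AddMonoidAlgebra.single m (1 : R) : AddMonoidAlgebra R (Fin n → ℤ)) * a
      = ∑ α ∈ a.coeff.support, AddMonoidAlgebra.single (m + α) (a.coeff α) := by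
    conv_lhs => rw [← AddMonoidAlgebra.sum_coeff_single a]
    rw [Finsupp.sum, Finset.mul_sum]
    refine Finset.sum_congr rfl fun α _ => ?_
    rw [AddMonoidAlgebra.single_mul_single, one_mul]
  rw [hrw]
  refine Subalgebra.sum_mem A fun α hα => ?_
  have h1 : AddMonoidAlgebra.of' R (Fin n → ℤ) (m + α) ∈ A := h α hα
  have h2 : (AddMonoidAlgebra.single (m + α) (a.coeff α) : AddMonoidAlgebra R (Fin n → ℤ))
      = (a.coeff α) • AddMonoidAlgebra.of' R (Fin n → ℤ) (m + α) := by
    rw [AddMonoidAlgebra.of']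
    rw [AddMonoidAlgebra.smul_single', mul_one]
  rw [h2]
  exact A.smul_mem h1 (a.coeff α)

lemma latticeCone_add {A : Set (AddMonoidAlgebra R (Fin n → ℤ))} {p q : Fin n → ℤ}
    (hp : p ∈ latticeCone A) (hq : q ∈ latticeCone A) : p + q ∈ latticeCone A := by
  have : iota n (p + q) ∈ coneOf (suppSet A) := by
    rw [iota_add]
    exact add_mem_coneOf hp hq
  exact this

lemma exists_good_translate {A : Set (AddMonoidAlgebra R (Fin n → ℤ))}
    (hgap : (gapSet A).Finite) (F : Finset (Fin n → ℤ)) (base γ : Fin n → ℤ)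
    (hbase : ∀ φ ∈ F, φ + base ∈ latticeCone A) (hγC : γ ∈ latticeCone A) (hγ : γ ≠ 0) :
    ∃ m : Fin n → ℤ, ∀ φ ∈ F, φ + m ∈ monSet A := by
  classical
  obtain ⟨i, hi⟩ : ∃ i, γ i ≠ 0 := by
    by_contra hcon
    push_neg at hcon
    exact hγ (funext hcon)
  have hfin : ∀ φ ∈ F, {k : ℕ | φ + base + k • γ ∈ gapSet A}.Finite := by
    intro φ _
    have hinj : Function.Injective (fun k : ℕ => φ + base + k • γ) := by
      intro k l h
      have h2 : (k : ℤ) * γ i = (l : ℤ) * γ i := by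
        have := congrFun h i
        simp only [Pi.add_apply, Pi.smul_apply, nsmul_eq_mul, Pi.mul_apply, Pi.natCast_apply] at this
        linarith
      exact_mod_cast mul_right_cancel₀ hi h2
    exact Set.Finite.preimage hinj.injOn hgap
  have hBad : (⋃ φ ∈ F, {k : ℕ | φ + base + k • γ ∈ gapSet A}).Finite :=
    Set.Finite.biUnion F.finite_toSet hfin
  obtain ⟨k, hk⟩ := hBad.infinite_compl.nonempty
  refine ⟨base + k • γ, fun φ hφ => ?_⟩
  have hall : ∀ j : ℕ, φ + base + j • γ ∈ latticeCone A := by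
    intro j
    induction j with
    | zero => simpa using hbase φ hφ
    | succ j ih =>
      have he : φ + base + (j + 1) • γ = (φ + base + j • γ) + γ := by
        rw [succ_nsmul]
        exact (add_assoc _ _ _).symm
      rw [he]
      exact latticeCone_add ih hγC
  have hlat : φ + (base + k • γ) ∈ latticeCone A := by
    rw [← add_assoc]
    exact hall k
  by_contra hmon
  have : φ + base + k • γ ∈ gapSet A := ⟨by rwa [add_assoc], by rwa [add_assoc]⟩
  exact hk (Set.mem_biUnion hφ this)

end QfcAux

open QfcAux in
/-- If `Gap(A)` is finite, then `A` is qfc in `B = R[x₁^{±1},…,xₙ^{±1}]`. -/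
theorem isQfc_of_finite_gapSet (R : Type*) [CommRing R] [IsDomain R] (n : ℕ) (hn : 1 ≤ n)
    (A : Subalgebra R (AddMonoidAlgebra R (Fin n → ℤ)))
    (hgap : (gapSet (A : Set (AddMonoidAlgebra R (Fin n → ℤ)))).Finite) :
    IsQfc A := by
  intro a b ha hb hab
  classical
  have hSab : ((a * b).coeff.support : Set (Fin n → ℤ)) ⊆
      suppSet (A : Set (AddMonoidAlgebra R (Fin n → ℤ))) :=
    fun x hx => ⟨a * b, hab, hx⟩
  have key : ∀ α ∈ a.coeff.support, ∀ β ∈ b.coeff.support,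
      α + β ∈ latticeCone (A : Set (AddMonoidAlgebra R (Fin n → ℤ))) := by
    intro α hα β hβ
    have h1 := sum_mem_coneOf_mul a b hα hβ
    exact coneOf_mono hSab h1
  obtain ⟨α₀, hα₀⟩ : a.coeff.support.Nonempty := Finsupp.support_nonempty_iff.2 (by simpa using ha)
  obtain ⟨β₀, hβ₀⟩ : b.coeff.support.Nonempty := Finsupp.support_nonempty_iff.2 (by simpa using hb)
  by_cases hzero : ∀ α ∈ a.coeff.support, ∀ β ∈ b.coeff.support, α + β = 0
  · -- `a` and `b` are single monomials with opposite exponents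
    have hsa : a.coeff.support ⊆ {α₀} := by
      intro α hα
      rw [Finset.mem_singleton]
      exact add_right_cancel ((hzero α hα β₀ hβ₀).trans (hzero α₀ hα₀ β₀ hβ₀).symm)
    have hsb : b.coeff.support ⊆ {β₀} := by
      intro β hβ
      rw [Finset.mem_singleton]
      exact add_left_cancel ((hzero α₀ hα₀ β hβ).trans (hzero α₀ hα₀ β₀ hβ₀).symm)
    obtain ⟨r, haeq⟩ : ∃ r, a = AddMonoidAlgebra.single α₀ r :=
      by obtain ⟨r, hr⟩ := Finsupp.support_subset_singleton'.1 hsa; exact ⟨r, AddMonoidAlgebra.coeff_injective hr⟩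
    obtain ⟨t, hbeq⟩ : ∃ t, b = AddMonoidAlgebra.single β₀ t :=
      by obtain ⟨t, ht⟩ := Finsupp.support_subset_singleton'.1 hsb; exact ⟨t, AddMonoidAlgebra.coeff_injective ht⟩
    refine ⟨monUnit R (-α₀), monUnit R (-β₀), ?_, ?_⟩
    · show (AddMonoidAlgebra.single (-α₀) 1 : AddMonoidAlgebra R (Fin n → ℤ)) * a ∈ A
      rw [haeq, AddMonoidAlgebra.single_mul_single, one_mul, neg_add_cancel]
      have h0 : (AddMonoidAlgebra.single (0 : Fin n → ℤ) r : AddMonoidAlgebra R (Fin n → ℤ))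
          = algebraMap R (AddMonoidAlgebra R (Fin n → ℤ)) r := by
        rw [AddMonoidAlgebra.coe_algebraMap]
        simp
      rw [h0]
      exact A.algebraMap_mem _
    · show (AddMonoidAlgebra.single (-β₀) 1 : AddMonoidAlgebra R (Fin n → ℤ)) * b ∈ A
      rw [hbeq, AddMonoidAlgebra.single_mul_single, one_mul, neg_add_cancel]
      have h0 : (AddMonoidAlgebra.single (0 : Fin n → ℤ) t : AddMonoidAlgebra R (Fin n → ℤ))
          = algebraMap R (AddMonoidAlgebra R (Fin n → ℤ)) t := by
        rw [AddMonoidAlgebra.coe_algebraMap]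
        simp
      rw [h0]
      exact A.algebraMap_mem _
  · push_neg at hzero
    obtain ⟨α₁, hα₁, β₁, hβ₁, hγ⟩ := hzero
    have hγC : α₁ + β₁ ∈ latticeCone (A : Set (AddMonoidAlgebra R (Fin n → ℤ))) :=
      key α₁ hα₁ β₁ hβ₁
    obtain ⟨m₁, hm₁⟩ := exists_good_translate hgap a.coeff.support β₀ (α₁ + β₁)
      (fun φ hφ => key φ hφ β₀ hβ₀) hγC hγ
    obtain ⟨m₂, hm₂⟩ := exists_good_translate hgap b.coeff.support α₀ (α₁ + β₁)
      (fun φ hφ => by have h1 := key α₀ hα₀ φ hφ; rwa [add_comm] at h1) hγC hγ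
    refine ⟨monUnit R m₁, monUnit R m₂, ?_, ?_⟩
    · show (AddMonoidAlgebra.single m₁ 1 : AddMonoidAlgebra R (Fin n → ℤ)) * a ∈ A
      exact monomial_mul_mem m₁ a (fun α hα => by rw [add_comm]; exact hm₁ α hα)
    · show (AddMonoidAlgebra.single m₂ 1 : AddMonoidAlgebra R (Fin n → ℤ)) * b ∈ A
      exact monomial_mul_mem m₂ b (fun β hβ => by rw [add_comm]; exact hm₂ β hβ)
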